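/- Vanishing-discount optimality in pathwise form (Corollary 1): Let d ≥ 1, β ∈ (0,1], let k ≥ max(1,β) and m with 1 ≤ m ≤ k+1 be real numbers, let 𝔧 ≥ 1 be a real number, and let Γ₀ > 0. There exists Γ > 0, depending only on d, β, k, m, 𝔧, Γ₀, such that for every α ∈ [1/2, 1), every x ∈ ℝ^d with ‖x‖ ≥ 1/(1−α), every sequence (x_t)_{t≥0} in ℝ^d with x₀ = x and ‖x_{t+1} − x_t‖ ≤ 𝔧 for all t, and every function H : ℝ^d → ℝ satisfying 0 ≤ H(y) ≤ Γ₀( (1+‖y‖)^{k−β} + (1−α)^{−m(k−β)/(k+2)} + (1−α)^{−(k−β)/2} ) for all y ∈ ℝ^d, one has Σ_{t=0}^∞ α^t H(x_t) ≤ Γ (1−α)^β Σ_{t=0}^∞ α^t ‖x_t‖^k. -/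

import Mathlib

noncomputable section

lemma aux_summable_rpow_geom (α : ℝ) (h0 : 0 < α) (h1 : α < 1) (k : ℝ) :
    Summable (fun t : ℕ => ((t : ℝ) + 1) ^ k * α ^ t) := by
  set n := ⌈k⌉₊ with hn
  have hα : ‖α‖ < 1 := by rw [Real.norm_eq_abs, abs_of_pos h0]; exact h1
  have h2 : Summable (fun s : ℕ => (s : ℝ) ^ n * α ^ s) :=
    summable_pow_mul_geometric_of_norm_lt_one n hα
  have h3 : Summable (fun t : ℕ => ((t + 1 : ℕ) : ℝ) ^ n * α ^ (t + 1)) :=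
    (summable_nat_add_iff 1).2 h2
  have h4 : Summable (fun t : ℕ => ((t : ℝ) + 1) ^ n * α ^ t) := by
    refine (h3.mul_left α⁻¹).congr (fun t => ?_)
    push_cast
    field_simp
    ring
  refine Summable.of_nonneg_of_le (fun t => by positivity) (fun t => ?_) h4
  have h5 : ((t : ℝ) + 1) ^ k ≤ ((t : ℝ) + 1) ^ (n : ℝ) :=
    Real.rpow_le_rpow_of_exponent_le (by exact_mod_cast Nat.le_add_left 1 t) (Nat.le_ceil k)
  rw [Real.rpow_natCast] at h5
  exact mul_le_mul_of_nonneg_right h5 (pow_nonneg h0.le t)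

set_option maxHeartbeats 1000000 in
theorem vanishing_discount_optimality_pathwise
    (d : ℕ) (hd : 1 ≤ d) (β k m jmp Γ₀ : ℝ)
    (hβ0 : 0 < β) (hβ1 : β ≤ 1) (hk : max 1 β ≤ k)
    (hm1 : 1 ≤ m) (hm2 : m ≤ k + 1)
    (hjmp : 1 ≤ jmp) (hΓ₀ : 0 < Γ₀) :
    ∃ Γ : ℝ, 0 < Γ ∧
      ∀ α : ℝ, 1 / 2 ≤ α → α < 1 →
      ∀ x : EuclideanSpace ℝ (Fin d), 1 / (1 - α) ≤ ‖x‖ →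
      ∀ xs : ℕ → EuclideanSpace ℝ (Fin d), xs 0 = x →
      (∀ t : ℕ, ‖xs (t + 1) - xs t‖ ≤ jmp) →
      ∀ H : EuclideanSpace ℝ (Fin d) → ℝ,
      (∀ y, 0 ≤ H y ∧ H y ≤ Γ₀ * ((1 + ‖y‖) ^ (k - β) +
          (1 - α) ^ (-(m * (k - β) / (k + 2))) + (1 - α) ^ (-((k - β) / 2)))) →
      (∑' t : ℕ, α ^ t * H (xs t)) ≤
        Γ * (1 - α) ^ β * ∑' t : ℕ, α ^ t * ‖xs t‖ ^ k := by
  have hk1 : (1 : ℝ) ≤ k := le_trans (le_max_left 1 β) hk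
  have hkβ : β ≤ k := le_trans (le_max_right 1 β) hk
  have hkβ0 : 0 ≤ k - β := by linarith
  have h2k : (0 : ℝ) < (2 : ℝ) ^ k := Real.rpow_pos_of_pos (by norm_num) k
  refine ⟨Γ₀ * (2 * (2 : ℝ) ^ k + 3 * ((2 : ℝ) ^ k * (2 * jmp + 1))), ⟨by positivity, ?_⟩⟩
  intro α hα2 hα1 x hx xs hxs0 hjump H hH
  set ε := 1 - α with hε
  have hε0 : 0 < ε := by simp [hε]; linarith
  have hε2 : ε ≤ 1 / 2 := by simp [hε]; linarith
  have hε1 : ε ≤ 1 := by linarith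
  have hα0 : 0 < α := by linarith
  -- norm bounds along trajectory
  have lower : ∀ t : ℕ, ‖x‖ - t * jmp ≤ ‖xs t‖ := by
    intro t
    induction t with
    | zero => simp [hxs0]
    | succ t ih =>
      have h1 : ‖xs t‖ - ‖xs (t + 1)‖ ≤ jmp := by
        calc ‖xs t‖ - ‖xs (t + 1)‖ ≤ ‖xs t - xs (t + 1)‖ := norm_sub_norm_le _ _
          _ = ‖xs (t + 1) - xs t‖ := norm_sub_rev _ _
          _ ≤ jmp := hjump t
      push_cast
      linarith
  have upper : ∀ t : ℕ, ‖xs t‖ ≤ ‖x‖ + t * jmp := by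
    intro t
    induction t with
    | zero => simp [hxs0]
    | succ t ih =>
      have h1 : ‖xs (t + 1)‖ - ‖xs t‖ ≤ jmp := le_trans (norm_sub_norm_le _ _) (hjump t)
      push_cast
      linarith
  -- summability of the right-hand series
  have hxpos : (0 : ℝ) < ‖x‖ := lt_of_lt_of_le (by positivity) hx
  have hS : Summable (fun t : ℕ => α ^ t * ‖xs t‖ ^ k) := by
    refine Summable.of_nonneg_of_le (fun t => by positivity) (fun t => ?_)
      (((aux_summable_rpow_geom α hα0 hα1 k).mul_left ((‖x‖ + jmp) ^ k)))
    have h1 : ‖xs t‖ ≤ (‖x‖ + jmp) * ((t : ℝ) + 1) := by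
      have := upper t
      have hj0 : (0 : ℝ) ≤ jmp := by linarith
      nlinarith [Nat.cast_nonneg (α := ℝ) t]
    have h2 : ‖xs t‖ ^ k ≤ ((‖x‖ + jmp) * ((t : ℝ) + 1)) ^ k :=
      Real.rpow_le_rpow (norm_nonneg _) h1 (by linarith)
    rw [Real.mul_rpow (by positivity) (by positivity)] at h2
    calc α ^ t * ‖xs t‖ ^ k ≤ α ^ t * ((‖x‖ + jmp) ^ k * ((t : ℝ) + 1) ^ k) :=
          mul_le_mul_of_nonneg_left h2 (by positivity)
      _ = (‖x‖ + jmp) ^ k * (((t : ℝ) + 1) ^ k * α ^ t) := by ring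
  have hgeo : Summable (fun t : ℕ => α ^ t) := summable_geometric_of_lt_one hα0.le hα1
  -- key pointwise bound
  have key : ∀ y : EuclideanSpace ℝ (Fin d),
      H y ≤ Γ₀ * (2 * (2 : ℝ) ^ k * ε ^ β * ‖y‖ ^ k + 3 * ε ^ (-(k - β))) := by
    intro y
    obtain ⟨h0, h1⟩ := hH y
    have hA : ε ^ (-(m * (k - β) / (k + 2))) ≤ ε ^ (-(k - β)) := by
      apply Real.rpow_le_rpow_of_exponent_ge hε0 hε1
      rw [neg_le_neg_iff, div_le_iff₀ (by linarith : (0:ℝ) < k + 2)]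
      nlinarith
    have hB : ε ^ (-((k - β) / 2)) ≤ ε ^ (-(k - β)) := by
      apply Real.rpow_le_rpow_of_exponent_ge hε0 hε1
      linarith
    by_cases hcase : 1 / (2 * ε) ≤ ‖y‖
    · have hy1 : (1 : ℝ) ≤ ‖y‖ := le_trans (by rw [le_div_iff₀ (by linarith : (0:ℝ) < 2 * ε)]; linarith) hcase
      have hy0 : (0 : ℝ) < ‖y‖ := by linarith
      have c1 : (1 + ‖y‖) ^ (k - β) ≤ 2 * (2 : ℝ) ^ k * ε ^ β * ‖y‖ ^ k := by
        have e1 : (1 + ‖y‖) ^ (k - β) ≤ (2 * ‖y‖) ^ (k - β) :=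
          Real.rpow_le_rpow (by positivity) (by linarith) hkβ0
        rw [Real.mul_rpow (by norm_num) (norm_nonneg y)] at e1
        have e2 : (2 : ℝ) ^ (k - β) ≤ (2 : ℝ) ^ k :=
          Real.rpow_le_rpow_of_exponent_le one_le_two (by linarith)
        have e3 : ‖y‖ ^ (k - β) = ‖y‖ ^ k * ‖y‖ ^ (-β) := by
          rw [← Real.rpow_add hy0]; ring_nf
        have e4 : ‖y‖ ^ (-β) ≤ (2 * ε) ^ β := by
          have h2e : (0 : ℝ) < 2 * ε := by linarith
          have e5 : (1 / (2 * ε)) ^ (-β) = (2 * ε) ^ β := by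
            rw [one_div, ← Real.rpow_neg_one (2 * ε), ← Real.rpow_mul h2e.le]
            norm_num
          calc ‖y‖ ^ (-β) ≤ (1 / (2 * ε)) ^ (-β) :=
                Real.rpow_le_rpow_of_nonpos (by positivity) hcase (by linarith)
            _ = (2 * ε) ^ β := e5
        have e6 : (2 * ε) ^ β ≤ 2 * ε ^ β := by
          rw [Real.mul_rpow (by norm_num) hε0.le]
          have : (2 : ℝ) ^ β ≤ 2 := by
            calc (2 : ℝ) ^ β ≤ (2 : ℝ) ^ (1 : ℝ) :=
              Real.rpow_le_rpow_of_exponent_le one_le_two hβ1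
              _ = 2 := Real.rpow_one 2
          exact mul_le_mul_of_nonneg_right this (Real.rpow_nonneg hε0.le β)
        calc (1 + ‖y‖) ^ (k - β) ≤ (2:ℝ) ^ (k - β) * ‖y‖ ^ (k - β) := e1
          _ ≤ (2:ℝ) ^ k * (‖y‖ ^ k * ‖y‖ ^ (-β)) := by
              rw [← e3]
              exact mul_le_mul_of_nonneg_right e2 (Real.rpow_nonneg hy0.le _)
          _ ≤ (2:ℝ) ^ k * (‖y‖ ^ k * (2 * ε ^ β)) := by
              have h9 : ‖y‖ ^ (-β) ≤ 2 * ε ^ β := le_trans e4 e6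
              exact mul_le_mul_of_nonneg_left
                (mul_le_mul_of_nonneg_left h9 (Real.rpow_nonneg (norm_nonneg y) k)) h2k.le
          _ = 2 * (2:ℝ) ^ k * ε ^ β * ‖y‖ ^ k := by ring
      calc H y ≤ Γ₀ * ((1 + ‖y‖) ^ (k - β) + ε ^ (-(m * (k - β) / (k + 2))) +
              ε ^ (-((k - β) / 2))) := h1
        _ ≤ Γ₀ * (2 * (2:ℝ) ^ k * ε ^ β * ‖y‖ ^ k + 3 * ε ^ (-(k - β))) := by
            apply mul_le_mul_of_nonneg_left _ hΓ₀.le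
            have hεnn : (0:ℝ) ≤ ε ^ (-(k - β)) := Real.rpow_nonneg hε0.le _
            linarith
    · push_neg at hcase
      have c1 : (1 + ‖y‖) ^ (k - β) ≤ ε ^ (-(k - β)) := by
        have h1e : (1 : ℝ) ≤ 1 / (2 * ε) := by
          rw [le_div_iff₀ (by linarith : (0:ℝ) < 2 * ε)]
          linarith
        have e0 : 1 + ‖y‖ ≤ 1 / ε := by
          have : 1 / (2 * ε) + 1 / (2 * ε) = 1 / ε := by field_simp [hε0.ne']; norm_num
          linarith
        have e1 : (1 + ‖y‖) ^ (k - β) ≤ (1 / ε) ^ (k - β) :=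
          Real.rpow_le_rpow (by positivity) e0 hkβ0
        have e2 : (1 / ε) ^ (k - β) = ε ^ (-(k - β)) := by
          rw [one_div, ← Real.rpow_neg_one ε, ← Real.rpow_mul hε0.le]
          ring_nf
        rw [e2] at e1
        exact e1
      have hterm : (0 : ℝ) ≤ 2 * (2:ℝ) ^ k * ε ^ β * ‖y‖ ^ k := by positivity
      calc H y ≤ Γ₀ * ((1 + ‖y‖) ^ (k - β) + ε ^ (-(m * (k - β) / (k + 2))) +
              ε ^ (-((k - β) / 2))) := h1
        _ ≤ Γ₀ * (2 * (2:ℝ) ^ k * ε ^ β * ‖y‖ ^ k + 3 * ε ^ (-(k - β))) := by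
            apply mul_le_mul_of_nonneg_left _ hΓ₀.le
            linarith [c1, hA, hB]
  -- lower bound on S
  have hSlb : ε ^ (-(k + 1)) ≤ (2:ℝ) ^ k * (2 * jmp + 1) * ∑' t : ℕ, α ^ t * ‖xs t‖ ^ k := by
    set N := ⌊1 / (2 * jmp * ε)⌋₊ with hN
    have hjmp0 : (0 : ℝ) < jmp := by linarith
    have hlow : ∀ t : ℕ, t ≤ N → 1 / (2 * ε) ≤ ‖xs t‖ := by
      intro t ht
      have h1 : (t : ℝ) ≤ 1 / (2 * jmp * ε) :=
        le_trans (by exact_mod_cast ht) (Nat.floor_le (by positivity))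
      have h2 : (t : ℝ) * jmp ≤ 1 / (2 * ε) := by
        have h2a := mul_le_mul_of_nonneg_right h1 hjmp0.le
        have h2b : 1 / (2 * jmp * ε) * jmp = 1 / (2 * ε) := by field_simp
        rw [h2b] at h2a
        exact h2a
      have h3 := lower t
      have h4 : 1 / ε ≤ ‖x‖ := hx
      have : 1 / ε - 1 / (2 * ε) = 1 / (2 * ε) := by field_simp; ring
      linarith
    have hαN : α ^ (N + 1) ≤ 2 * jmp / (2 * jmp + 1) := by
      have hb : 1 + (N + 1 : ℕ) * ε ≤ (1 + ε) ^ (N + 1) :=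
        one_add_mul_le_pow (by linarith) (N + 1)
      have hc : α ^ (N + 1) * (1 + ε) ^ (N + 1) ≤ 1 := by
        rw [← mul_pow]
        apply pow_le_one₀ (by nlinarith)
        nlinarith
      have hNe : (1 : ℝ) ≤ 2 * jmp * (((N : ℝ) + 1) * ε) := by
        have h5 : 1 / (2 * jmp * ε) < (N : ℝ) + 1 := Nat.lt_floor_add_one _
        rw [div_lt_iff₀ (by positivity)] at h5
        nlinarith
      have h6 : α ^ (N + 1) * (1 + ((N : ℝ) + 1) * ε) ≤ 1 := by
        have := mul_le_mul_of_nonneg_left hb (pow_nonneg hα0.le (N + 1))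
        push_cast at this ⊢
        linarith
      have hA0 : (0 : ℝ) ≤ α ^ (N + 1) := pow_nonneg hα0.le (N + 1)
      rw [le_div_iff₀ (by positivity : (0:ℝ) < 2 * jmp + 1)]
      nlinarith [mul_le_mul_of_nonneg_left h6 (by linarith : (0:ℝ) ≤ 2 * jmp),
        mul_le_mul_of_nonneg_left hNe hA0]
    have hsum_geo : (1 / (2 * jmp + 1)) / ε ≤ ∑ t ∈ Finset.range (N + 1), α ^ t := by
      have hgs : ∑ t ∈ Finset.range (N + 1), α ^ t = (1 - α ^ (N + 1)) / ε := by
        rw [geom_sum_eq (by linarith : α ≠ 1)]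
        rw [hε]
        rw [div_eq_div_iff (by linarith) (by linarith)]
        ring
      rw [hgs]
      apply div_le_div_of_nonneg_right _ hε0.le
      · have : 1 - 2 * jmp / (2 * jmp + 1) = 1 / (2 * jmp + 1) := by
          field_simp
          ring
        linarith
    have hpartial : (1 / (2 * ε)) ^ k * ((1 / (2 * jmp + 1)) / ε) ≤
        ∑' t : ℕ, α ^ t * ‖xs t‖ ^ k := by
      have h8 : (1 / (2 * ε)) ^ k * ((1 / (2 * jmp + 1)) / ε) ≤
          ∑ t ∈ Finset.range (N + 1), α ^ t * ‖xs t‖ ^ k := by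
        calc (1 / (2 * ε)) ^ k * ((1 / (2 * jmp + 1)) / ε)
            ≤ (1 / (2 * ε)) ^ k * ∑ t ∈ Finset.range (N + 1), α ^ t :=
              mul_le_mul_of_nonneg_left hsum_geo (Real.rpow_nonneg (by positivity) k)
          _ = ∑ t ∈ Finset.range (N + 1), α ^ t * (1 / (2 * ε)) ^ k := by
              rw [Finset.mul_sum]; apply Finset.sum_congr rfl; intros; ring
          _ ≤ ∑ t ∈ Finset.range (N + 1), α ^ t * ‖xs t‖ ^ k := by
              apply Finset.sum_le_sum
              intro t ht
              have := hlow t (Nat.lt_succ_iff.mp (Finset.mem_range.mp ht))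
              exact mul_le_mul_of_nonneg_left
                (Real.rpow_le_rpow (by positivity) this (by linarith)) (pow_nonneg hα0.le t)
      exact le_trans h8 (Summable.sum_le_tsum _ (fun t _ => by positivity) hS)
    have hrw : (2:ℝ) ^ k * (2 * jmp + 1) * ((1 / (2 * ε)) ^ k * ((1 / (2 * jmp + 1)) / ε))
        = ε ^ (-(k + 1)) := by
      have e1 : (1 / (2 * ε)) ^ k = ((2:ℝ) ^ k)⁻¹ * ε ^ (-k) := by
        rw [one_div, Real.inv_rpow (by positivity), Real.mul_rpow (by norm_num) hε0.le,
          mul_inv, ← Real.rpow_neg hε0.le]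
      rw [e1]
      rw [show ε ^ (-(k + 1)) = ε ^ (-k) * ε⁻¹ by
        rw [← Real.rpow_neg_one ε, ← Real.rpow_add hε0]; ring_nf]
      field_simp
    calc ε ^ (-(k + 1)) = (2:ℝ) ^ k * (2 * jmp + 1) *
          ((1 / (2 * ε)) ^ k * ((1 / (2 * jmp + 1)) / ε)) := hrw.symm
      _ ≤ (2:ℝ) ^ k * (2 * jmp + 1) * ∑' t : ℕ, α ^ t * ‖xs t‖ ^ k := by
          apply mul_le_mul_of_nonneg_left hpartial (by positivity)
  -- assemble
  set S := ∑' t : ℕ, α ^ t * ‖xs t‖ ^ k with hSdef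
  have hS0 : 0 ≤ S := tsum_nonneg (fun t => by positivity)
  have hRHSsum : Summable (fun t : ℕ =>
      Γ₀ * (2 * (2:ℝ) ^ k * ε ^ β) * (α ^ t * ‖xs t‖ ^ k) + (3 * Γ₀ * ε ^ (-(k - β))) * α ^ t) :=
    (hS.mul_left _).add (hgeo.mul_left _)
  have hbound : ∀ t : ℕ, α ^ t * H (xs t) ≤
      Γ₀ * (2 * (2:ℝ) ^ k * ε ^ β) * (α ^ t * ‖xs t‖ ^ k) + (3 * Γ₀ * ε ^ (-(k - β))) * α ^ t := by
    intro t
    calc α ^ t * H (xs t)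
        ≤ α ^ t * (Γ₀ * (2 * (2:ℝ) ^ k * ε ^ β * ‖xs t‖ ^ k + 3 * ε ^ (-(k - β)))) :=
          mul_le_mul_of_nonneg_left (key (xs t)) (pow_nonneg hα0.le t)
      _ = Γ₀ * (2 * (2:ℝ) ^ k * ε ^ β) * (α ^ t * ‖xs t‖ ^ k)
          + (3 * Γ₀ * ε ^ (-(k - β))) * α ^ t := by ring
  have hLHSsum : Summable (fun t : ℕ => α ^ t * H (xs t)) :=
    Summable.of_nonneg_of_le (fun t => mul_nonneg (pow_nonneg hα0.le t) ((hH (xs t)).1))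
      hbound hRHSsum
  have step1 : (∑' t : ℕ, α ^ t * H (xs t)) ≤
      Γ₀ * (2 * (2:ℝ) ^ k * ε ^ β) * S + (3 * Γ₀ * ε ^ (-(k - β))) * ε⁻¹ := by
    calc (∑' t : ℕ, α ^ t * H (xs t))
        ≤ ∑' t : ℕ, (Γ₀ * (2 * (2:ℝ) ^ k * ε ^ β) * (α ^ t * ‖xs t‖ ^ k)
            + (3 * Γ₀ * ε ^ (-(k - β))) * α ^ t) := Summable.tsum_le_tsum hbound hLHSsum hRHSsum
      _ = Γ₀ * (2 * (2:ℝ) ^ k * ε ^ β) * S + (3 * Γ₀ * ε ^ (-(k - β))) * ∑' t : ℕ, α ^ t := by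
          rw [Summable.tsum_add (hS.mul_left _) (hgeo.mul_left _), tsum_mul_left, tsum_mul_left]
      _ = Γ₀ * (2 * (2:ℝ) ^ k * ε ^ β) * S + (3 * Γ₀ * ε ^ (-(k - β))) * ε⁻¹ := by
          rw [tsum_geometric_of_lt_one hα0.le hα1, hε]
  have step2 : (3 * Γ₀ * ε ^ (-(k - β))) * ε⁻¹ ≤
      Γ₀ * (3 * ((2:ℝ) ^ k * (2 * jmp + 1))) * ε ^ β * S := by
    have e1 : ε ^ (-(k - β)) * ε⁻¹ = ε ^ β * ε ^ (-(k + 1)) := by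
      rw [← Real.rpow_neg_one ε, ← Real.rpow_add hε0, ← Real.rpow_add hε0]
      ring_nf
    calc (3 * Γ₀ * ε ^ (-(k - β))) * ε⁻¹ = 3 * Γ₀ * (ε ^ β * ε ^ (-(k + 1))) := by
          rw [← e1]; ring
      _ ≤ 3 * Γ₀ * (ε ^ β * ((2:ℝ) ^ k * (2 * jmp + 1) * S)) := by
          apply mul_le_mul_of_nonneg_left _ (by positivity)
          exact mul_le_mul_of_nonneg_left hSlb (Real.rpow_nonneg hε0.le β)
      _ = Γ₀ * (3 * ((2:ℝ) ^ k * (2 * jmp + 1))) * ε ^ β * S := by ring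
  calc (∑' t : ℕ, α ^ t * H (xs t))
      ≤ Γ₀ * (2 * (2:ℝ) ^ k * ε ^ β) * S + (3 * Γ₀ * ε ^ (-(k - β))) * ε⁻¹ := step1
    _ ≤ Γ₀ * (2 * (2:ℝ) ^ k * ε ^ β) * S + Γ₀ * (3 * ((2:ℝ) ^ k * (2 * jmp + 1))) * ε ^ β * S :=
        by linarith [step2]
    _ = Γ₀ * (2 * (2:ℝ) ^ k + 3 * ((2:ℝ) ^ k * (2 * jmp + 1))) * (1 - α) ^ β * S := by
        rw [← hε]; ring
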